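/- The mutual information I(X_{(i)}; X_{(K-i)}, Y) in the noisy group testing model equals I₁ + I₂, where I₁ = i(1-q)(1-p+pu)^K·( (pu/(1-p+pu))·log₂ u − log₂(1-p+pu) ) and I₂ = (1/ln 2)·∑_{j=2}^∞ [(1-q)^j/(j(j-1))]·(1-p+pu^j)^K·(1 − ((1-p+pu)^j/(1-p+pu^j))^i). -/

import Mathlib

open Finset

/-- The binary entropy function. -/
noncomputable def binEnt (θ : ℝ) : ℝ :=
  -θ * Real.logb 2 θ - (1 - θ) * Real.logb 2 (1 - θ)

/-- H(Y | X_{(K)}) in the noisy group testing model, as a binomial sum. -/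
noncomputable def HYfull (K : ℕ) (p u q : ℝ) : ℝ :=
  ∑ j ∈ Finset.range (K + 1),
    (K.choose j : ℝ) * p ^ j * (1 - p) ^ (K - j) * binEnt ((1 - q) * u ^ j)

/-- H(Y | X_{(K-i)}) in the noisy group testing model, as a binomial sum. -/
noncomputable def HYsub (K i : ℕ) (p u q : ℝ) : ℝ :=
  ∑ l ∈ Finset.range (K - i + 1),
    ((K - i).choose l : ℝ) * p ^ l * (1 - p) ^ (K - i - l) *
      binEnt ((1 - q) * u ^ l * (1 - p + p * u) ^ i)

/-- The lead term I₁. -/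
noncomputable def I1 (K i : ℕ) (p u q : ℝ) : ℝ :=
  (i : ℝ) * (1 - q) * (1 - p + p * u) ^ K *
    (p * u / (1 - p + p * u) * Real.logb 2 u - Real.logb 2 (1 - p + p * u))

/-- The error term I₂ (the series index j ≥ 2 is written as j = m + 2). -/
noncomputable def I2 (K i : ℕ) (p u q : ℝ) : ℝ :=
  (1 / Real.log 2) *
    ∑' m : ℕ,
      (1 - q) ^ (m + 2) / ((m + 2) * (m + 1)) *
        (1 - p + p * u ^ (m + 2)) ^ K *
        (1 - ((1 - p + p * u) ^ (m + 2) / (1 - p + p * u ^ (m + 2))) ^ i)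


-- binomial identity
lemma binomSum (N : ℕ) (p t : ℝ) :
    ∑ j ∈ range (N+1), (N.choose j : ℝ) * p^j * (1-p)^(N-j) * t^j
      = (1 - p + p*t)^N := by
  rw [show (1 - p + p*t) = p*t + (1-p) by ring, add_pow]
  refine Finset.sum_congr rfl fun j hj => ?_
  rw [Finset.mem_range, Nat.lt_succ_iff] at hj
  rw [mul_pow]; ring

lemma binomDeriv (N : ℕ) (p t : ℝ) :
    ∑ j ∈ range (N+1), (j:ℝ) * ((N.choose j : ℝ) * p^j * (1-p)^(N-j) * t^j)
      = (N:ℝ) * (p*t) * (1-p+p*t)^(N-1) := by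
  cases N with
  | zero => simp
  | succ n =>
    rw [Finset.sum_range_succ']
    have key : ∀ j : ℕ, ((j:ℝ)+1) * ((n+1).choose (j+1) : ℝ) = ((n:ℝ)+1) * (n.choose j : ℝ) := by
      intro j
      have := Nat.add_one_mul_choose_eq n j
      have : ((n.succ * n.choose j : ℕ) : ℝ) = (((n+1).choose (j+1) * (j+1) : ℕ) : ℝ) := by
        exact_mod_cast congrArg (Nat.cast (R := ℝ)) this
      push_cast at this
      linarith [this]
    have : ∑ j ∈ range (n+1), ((j:ℝ)+1) * (((n+1).choose (j+1) : ℝ) * p^(j+1) * (1-p)^(n+1-(j+1)) * t^(j+1))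
        = ((n:ℝ)+1) * (p*t) * ∑ j ∈ range (n+1), (n.choose j : ℝ) * p^j * (1-p)^(n-j) * t^j := by
      rw [Finset.mul_sum]
      refine Finset.sum_congr rfl fun j hj => ?_
      have h1 := key j
      have : (((n+1).choose (j+1) : ℝ)) * (((j:ℝ)+1)) = ((n:ℝ)+1) * (n.choose j : ℝ) := by
        rw [mul_comm]; exact h1
      rw [Nat.succ_sub_succ]
      calc ((j:ℝ)+1) * (((n+1).choose (j+1) : ℝ) * p^(j+1) * (1-p)^(n-j) * t^(j+1))
          = (((j:ℝ)+1) * ((n+1).choose (j+1) : ℝ)) * (p^(j+1) * (1-p)^(n-j) * t^(j+1)) := by ring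
        _ = (((n:ℝ)+1) * (n.choose j : ℝ)) * (p^(j+1) * (1-p)^(n-j) * t^(j+1)) := by rw [key j]
        _ = ((n:ℝ)+1) * (p*t) * ((n.choose j : ℝ) * p^j * (1-p)^(n-j) * t^j) := by ring
    push_cast at this ⊢
    rw [this, binomSum]
    simp


lemma hasSum_T {x : ℝ} (hx0 : 0 ≤ x) (hx1 : x ≤ 1) :
    HasSum (fun n : ℕ => x^(n+2) / (((n:ℝ)+2)*((n:ℝ)+1)))
      (x + (1-x)*Real.log (1-x)) := by
  rcases eq_or_lt_of_le hx1 with h1 | h1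
  · -- x = 1
    subst h1
    simp only [sub_self, Real.log_zero, mul_zero, add_zero, one_pow]
    have hne : ∀ n : ℕ, (1:ℝ) / (((n:ℝ)+2)*((n:ℝ)+1)) = 1/((n:ℝ)+1) - 1/((n:ℝ)+2) := by
      intro n
      have hn1 : ((n:ℝ)+1) ≠ 0 := by positivity
      have hn2 : ((n:ℝ)+2) ≠ 0 := by positivity
      field_simp
      ring
    rw [hasSum_iff_tendsto_nat_of_nonneg (fun n => by positivity)]
    have hps : ∀ N : ℕ, ∑ n ∈ range N, (1:ℝ)/(((n:ℝ)+2)*((n:ℝ)+1)) = 1 - 1/((N:ℝ)+1) := by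
      intro N
      have := Finset.sum_range_sub' (f := fun n : ℕ => 1/((n:ℝ)+1)) N
      push_cast at this
      rw [show (1:ℝ) - 1/((N:ℝ)+1) = 1/((0:ℝ)+1) - 1/((N:ℝ)+1) by norm_num, ← this]
      refine Finset.sum_congr rfl fun n _ => ?_
      rw [hne n]; ring_nf
    simp only [hps]
    have : Filter.Tendsto (fun N : ℕ => 1 - 1/((N:ℝ)+1)) Filter.atTop (nhds (1 - 0)) :=
      Filter.Tendsto.const_sub _ tendsto_one_div_add_atTop_nhds_zero_nat
    simpa using this
  · -- x < 1
    have habs : |x| < 1 := abs_lt.2 ⟨by linarith, h1⟩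
    have hL := Real.hasSum_pow_div_log_of_abs_lt_one habs
    have h2 : HasSum (fun n : ℕ => x * (x^(n+1)/((n:ℝ)+1))) (x * (-Real.log (1-x))) :=
      hL.mul_left x
    have h3 : HasSum (fun n : ℕ => x^(n+1+1)/((n:ℝ)+1+1)) ((-Real.log (1-x)) - ∑ i ∈ range 1, x^(i+1)/((i:ℝ)+1)) := by
      have := (hasSum_nat_add_iff' (f := fun n : ℕ => x^(n+1)/((n:ℝ)+1)) 1).2 hL
      convert this using 2 with n
      · rfl
      push_cast; ring_nf
    rw [Finset.sum_range_one] at h3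
    simp only [Nat.cast_zero] at h3
    have h4 := h2.sub h3
    convert h4 using 1
    · rfl
    · funext n
      have hn1 : ((n:ℝ)+1) ≠ 0 := by positivity
      have hn2 : ((n:ℝ)+1+1) ≠ 0 := by positivity
      show x^(n+2) / (((n:ℝ)+2)*((n:ℝ)+1)) = _
      rw [show (n+1+1) = n+2 from rfl]
      field_simp
      ring
    · simp only [pow_one, zero_add]
      ring

lemma G_decomp (N : ℕ) (p u c : ℝ) (hp : 0 < p) (hp1 : p < 1)
    (hu0 : 0 < u) (hu1 : u < 1) (hc0 : 0 < c) (hc1 : c ≤ 1) :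
    ∃ S : ℝ,
      HasSum (fun n : ℕ => c^(n+2)/(((n:ℝ)+2)*((n:ℝ)+1)) * (1-p+p*u^(n+2))^N) S ∧
      (∑ j ∈ range (N+1), (N.choose j : ℝ)*p^j*(1-p)^(N-j) * binEnt (c*u^j)) * Real.log 2
        = -(c*Real.log c)*(1-p+p*u)^N - c*Real.log u*((N:ℝ)*(p*u)*(1-p+p*u)^(N-1))
          + c*(1-p+p*u)^N - S := by
  have hlog2 : Real.log 2 ≠ 0 := ne_of_gt (Real.log_pos (by norm_num))
  set w : ℕ → ℝ := fun j => (N.choose j : ℝ)*p^j*(1-p)^(N-j) with hw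
  set T : ℕ → ℝ := fun j => (c*u^j) + (1-(c*u^j))*Real.log (1-(c*u^j)) with hT
  -- bounds on θ_j
  have hθ0 : ∀ j : ℕ, 0 ≤ c*u^j := fun j => by positivity
  have hθ1 : ∀ j : ℕ, c*u^j ≤ 1 := fun j => by
    calc c*u^j ≤ 1*1 := by
          apply mul_le_mul hc1 (pow_le_one₀ hu0.le hu1.le) (by positivity) one_pos.le
      _ = 1 := by ring
  -- the family of HasSums
  have hfam : ∀ j ∈ range (N+1),
      HasSum (fun n : ℕ => w j * ((c*u^j)^(n+2) / (((n:ℝ)+2)*((n:ℝ)+1)))) (w j * T j) :=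
    fun j _ => (hasSum_T (hθ0 j) (hθ1 j)).mul_left (w j)
  have hS : HasSum (fun n : ℕ => ∑ j ∈ range (N+1), w j * ((c*u^j)^(n+2) / (((n:ℝ)+2)*((n:ℝ)+1))))
      (∑ j ∈ range (N+1), w j * T j) := hasSum_sum hfam
  refine ⟨∑ j ∈ range (N+1), w j * T j, ?_, ?_⟩
  · -- rewrite the inner finite sum
    convert hS using 1
    funext n
    have : ∑ j ∈ range (N+1), w j * ((c*u^j)^(n+2) / (((n:ℝ)+2)*((n:ℝ)+1)))
        = (c^(n+2)/(((n:ℝ)+2)*((n:ℝ)+1))) * ∑ j ∈ range (N+1), (N.choose j : ℝ)*p^j*(1-p)^(N-j)*(u^(n+2))^j := by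
      rw [Finset.mul_sum]
      refine Finset.sum_congr rfl fun j _ => ?_
      simp only [hw, mul_pow, ← pow_mul]
      rw [show j*(n+2) = (n+2)*j from Nat.mul_comm _ _]
      ring
    rw [this, binomSum]
  · -- the entropy identity
    have hent : ∀ j : ℕ, binEnt (c*u^j) * Real.log 2
        = -(c*u^j)*(Real.log c + (j:ℝ)*Real.log u) + (c*u^j) - T j := by
      intro j
      have hlogθ : Real.log (c*u^j) = Real.log c + (j:ℝ)*Real.log u := by
        rw [Real.log_mul (ne_of_gt hc0) (by positivity), Real.log_pow]
      unfold binEnt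
      rw [Real.logb, Real.logb, hT]
      field_simp
      rw [hlogθ]
      ring
    rw [Finset.sum_mul]
    have : ∑ j ∈ range (N+1), w j * binEnt (c*u^j) * Real.log 2
        = ∑ j ∈ range (N+1), (w j * (-(c*u^j)*(Real.log c + (j:ℝ)*Real.log u) + (c*u^j)) - w j * T j) := by
      refine Finset.sum_congr rfl fun j _ => ?_
      rw [mul_assoc, hent j]
      ring
    rw [this, Finset.sum_sub_distrib]
    have hre : ∑ j ∈ range (N+1), w j * (-(c*u^j)*(Real.log c + (j:ℝ)*Real.log u) + (c*u^j))
        = -(c*Real.log c) * (∑ j ∈ range (N+1), w j * u^j)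
          - (c*Real.log u) * (∑ j ∈ range (N+1), (j:ℝ)*(w j * u^j))
          + c * (∑ j ∈ range (N+1), w j * u^j) := by
      rw [Finset.mul_sum, Finset.mul_sum, Finset.mul_sum, ← Finset.sum_sub_distrib,
        ← Finset.sum_add_distrib]
      refine Finset.sum_congr rfl fun j _ => ?_
      ring
    have e1 : ∑ j ∈ range (N+1), w j * u^j = (1-p+p*u)^N := by
      rw [← binomSum N p u]
    have e2 : ∑ j ∈ range (N+1), (j:ℝ)*(w j * u^j) = (N:ℝ)*(p*u)*(1-p+p*u)^(N-1) := by
      rw [← binomDeriv N p u]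
    rw [hre, e1, e2]

/-- The mutual information I(X_{(i)}; X_{(K-i)}, Y) = H(Y|X_{(K-i)}) − H(Y|X_{(K)})
equals I₁ + I₂. -/
theorem mutual_information_eq_I1_add_I2 (K i : ℕ) (hi : 1 ≤ i) (hiK : i ≤ K)
    (p u q : ℝ) (hp : p ∈ Set.Ioo (0:ℝ) 1) (hu : u ∈ Set.Ioo (0:ℝ) 1)
    (hq : q ∈ Set.Ico (0:ℝ) 1) :
    HYsub K i p u q - HYfull K p u q = I1 K i p u q + I2 K i p u q := by
  obtain ⟨hp0, hp1⟩ := hp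
  obtain ⟨hu0, hu1⟩ := hu
  obtain ⟨hq0, hq1⟩ := hq
  have hlog2 : Real.log 2 ≠ 0 := ne_of_gt (Real.log_pos (by norm_num))
  set a : ℝ := 1 - p + p*u with ha
  have ha0 : 0 < a := by nlinarith
  have ha1 : a < 1 := by nlinarith
  have haK : a ≠ 0 := ne_of_gt ha0
  have hq0' : 0 < 1 - q := by linarith
  have hq1' : 1 - q ≤ 1 := by linarith
  -- full decomposition
  obtain ⟨Sf, hSf, hEf⟩ := G_decomp K p u (1-q) hp0 hp1 hu0 hu1 hq0' hq1'
  -- sub decomposition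
  have hcs0 : 0 < (1-q)*a^i := by positivity
  have hcs1 : (1-q)*a^i ≤ 1 := by
    calc (1-q)*a^i ≤ 1*1 :=
          mul_le_mul hq1' (pow_le_one₀ ha0.le ha1.le) (by positivity) one_pos.le
      _ = 1 := by ring
  obtain ⟨Ss, hSs, hEs⟩ := G_decomp (K-i) p u ((1-q)*a^i) hp0 hp1 hu0 hu1 hcs0 hcs1
  -- identify HYfull and HYsub with the sums in the decompositions
  have hHf : HYfull K p u q = ∑ j ∈ range (K+1), (K.choose j : ℝ)*p^j*(1-p)^(K-j) * binEnt ((1-q)*u^j) := rfl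
  have hHs : HYsub K i p u q
      = ∑ l ∈ range (K-i+1), ((K-i).choose l : ℝ)*p^l*(1-p)^(K-i-l) * binEnt (((1-q)*a^i)*u^l) := by
    unfold HYsub
    refine Finset.sum_congr rfl fun l _ => ?_
    rw [show ((1-q)*a^i)*u^l = (1-q)*u^l*a^i by ring]
  -- the I2 series
  set b : ℕ → ℝ := fun n => 1 - p + p*u^(n+2) with hb
  have hb0 : ∀ n, 0 < b n := by
    intro n
    show 0 < 1 - p + p*u^(n+2)
    have h1 : u^(n+2) ≤ 1 := pow_le_one₀ hu0.le hu1.le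
    have h2 : (0:ℝ) < u^(n+2) := by positivity
    nlinarith
  have hterm : ∀ n : ℕ,
      (1 - q) ^ (n + 2) / (((n:ℝ) + 2) * ((n:ℝ) + 1)) * (b n) ^ K *
        (1 - (a ^ (n + 2) / b n) ^ i)
      = (1-q)^(n+2)/(((n:ℝ)+2)*((n:ℝ)+1)) * (b n)^K
        - ((1-q)*a^i)^(n+2)/(((n:ℝ)+2)*((n:ℝ)+1)) * (b n)^(K-i) := by
    intro n
    have hbne : b n ≠ 0 := ne_of_gt (hb0 n)
    have hsplit : (b n)^K = (b n)^(K-i) * (b n)^i := by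
      rw [← pow_add, Nat.sub_add_cancel hiK]
    have hpow : ((1-q)*a^i)^(n+2) = (1-q)^(n+2) * (a^(n+2))^i := by
      rw [mul_pow, ← pow_mul, ← pow_mul, Nat.mul_comm]
    rw [hpow, div_pow, hsplit]
    have hbine : (b n)^i ≠ 0 := pow_ne_zero _ hbne
    field_simp
  have hI2sum : HasSum (fun n : ℕ =>
      (1 - q) ^ (n + 2) / (((n:ℝ) + 2) * ((n:ℝ) + 1)) * (b n) ^ K *
        (1 - (a ^ (n + 2) / b n) ^ i)) (Sf - Ss) := by
    have := hSf.sub hSs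
    convert this using 1
    · rfl
    funext n
    exact hterm n
  have hI2 : I2 K i p u q * Real.log 2 = Sf - Ss := by
    unfold I2
    rw [← hI2sum.tsum_eq]
    field_simp
    rfl
  -- I1
  have hI1 : I1 K i p u q * Real.log 2
      = (i:ℝ)*(1-q)*(p*u)*a^(K-1)*Real.log u - (i:ℝ)*(1-q)*a^K*Real.log a := by
    unfold I1
    rw [Real.logb, Real.logb]
    have hKpow : a^K = a * a^(K-1) := by
      conv_lhs => rw [show K = 1 + (K-1) by omega]
      rw [pow_add, pow_one]
    field_simp
    rw [hKpow]
    ring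
  -- main computation
  have key : (HYsub K i p u q - HYfull K p u q) * Real.log 2
      = (I1 K i p u q + I2 K i p u q) * Real.log 2 := by
    rw [sub_mul, hHf, hHs, hEf, hEs, add_mul, hI1, hI2]
    have hlogcs : Real.log ((1-q)*a^i) = Real.log (1-q) + (i:ℝ)*Real.log a := by
      rw [Real.log_mul (ne_of_gt hq0') (by positivity), Real.log_pow]
    rw [hlogcs]
    have hcast : ((K-i:ℕ):ℝ) = (K:ℝ) - (i:ℝ) := by
      push_cast [Nat.cast_sub hiK]; ring
    rw [hcast]
    have hsplit1 : a^i * a^(K-i) = a^K := by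
      rw [← pow_add, Nat.add_sub_cancel' hiK]
    have hsplit2 : ((K:ℝ)-(i:ℝ)) * (a^i * a^(K-i-1)) = ((K:ℝ)-(i:ℝ)) * a^(K-1) := by
      rcases eq_or_lt_of_le hiK with h | h
      · rw [h]; simp
      · congr 1
        rw [← pow_add]
        congr 1
        omega
    linear_combination ((1-q) - (1-q)*(Real.log (1-q) + (i:ℝ)*Real.log a)) * hsplit1
      + (-((1-q)*Real.log u*(p*u))) * hsplit2
  exact mul_right_cancel₀ hlog2 key
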